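/- For the switch channel, let 𝒱 be any finite set and let (S,V,X₁,X₂,Y) be random variables whose joint pmf has the product form (1/2)·P_{X₂}(x₂)·P_{X₁|X₂}(x₁|x₂)·P_{V|S,X₁,X₂}(v|s,x₁,x₂) with Y = X_S. If I(V,X₁,X₂ ; Y) - I(V,X₁,X₂ ; S) ≥ 1, then H(Y) = 1, S is independent of (V,X₁,X₂), H(Y | X₁,X₂) = 0, and P(X₁ = X₂) = 1. -/

import Mathlib

open scoped BigOperators
open Classical

noncomputable section

/-- Probability that the random variable `X` equals `x` under the pmf `p`. -/
def pr {Ω α : Type*} [Fintype Ω] (p : Ω → ℝ) (X : Ω → α) (x : α) : ℝ :=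
  ∑ ω : Ω, if X ω = x then p ω else 0

/-- Shannon entropy (in bits), with the convention `0 · log₂ 0 = 0`. -/
def ent {Ω α : Type*} [Fintype Ω] (p : Ω → ℝ) (X : Ω → α) : ℝ :=
  -∑ x ∈ Finset.univ.image X, pr p X x * Real.logb 2 (pr p X x)

/-- Conditional entropy `H(X|Y) = H(X,Y) - H(Y)`. -/
def condEnt {Ω α β : Type*} [Fintype Ω] (p : Ω → ℝ) (X : Ω → α) (Y : Ω → β) : ℝ :=
  ent p (fun ω => (X ω, Y ω)) - ent p Y

/-- Mutual information `I(X;Y) = H(X) + H(Y) - H(X,Y)`. -/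
def mi {Ω α β : Type*} [Fintype Ω] (p : Ω → ℝ) (X : Ω → α) (Y : Ω → β) : ℝ :=
  ent p X + ent p Y - ent p (fun ω => (X ω, Y ω))

/-- Conditional mutual information `I(X;Y|Z) = H(X,Z) + H(Y,Z) - H(X,Y,Z) - H(Z)`. -/
def cmi {Ω α β γ : Type*} [Fintype Ω] (p : Ω → ℝ) (X : Ω → α) (Y : Ω → β) (Z : Ω → γ) : ℝ :=
  ent p (fun ω => (X ω, Z ω)) + ent p (fun ω => (Y ω, Z ω))
    - ent p (fun ω => (X ω, Y ω, Z ω)) - ent p Z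

/-- `p` is a probability mass function on the finite sample space `Ω`. -/
def IsPMF {Ω : Type*} [Fintype Ω] (p : Ω → ℝ) : Prop :=
  (∀ ω, 0 ≤ p ω) ∧ ∑ ω : Ω, p ω = 1

/-- The random variables `X` and `Y` are independent under `p`. -/
def IndepRV {Ω α β : Type*} [Fintype Ω] (p : Ω → ℝ) (X : Ω → α) (Y : Ω → β) : Prop :=
  ∀ x y, pr p (fun ω => (X ω, Y ω)) (x, y) = pr p X x * pr p Y y

end

section helpers
variable {Ω α β : Type*} [Fintype Ω] (p : Ω → ℝ)

lemma pr_nonneg (h : ∀ ω, 0 ≤ p ω) (X : Ω → α) (x : α) : 0 ≤ pr p X x :=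
  Finset.sum_nonneg fun ω _ => by split <;> simp [h ω]

lemma pr_congr {X Y : Ω → α} (h : ∀ ω, p ω ≠ 0 → X ω = Y ω) (x : α) :
    pr p X x = pr p Y x := by
  unfold pr
  apply Finset.sum_congr rfl
  intro ω _
  by_cases hp : p ω = 0
  · simp [hp]
  · rw [h ω hp]

lemma sum_pr [Fintype α] (X : Ω → α) : ∑ x : α, pr p X x = ∑ ω, p ω := by
  unfold pr
  rw [Finset.sum_comm]
  exact Finset.sum_congr rfl fun ω _ => by simp

lemma pr_fst [Fintype β] (X : Ω → α) (Y : Ω → β) (x : α) :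
    ∑ y : β, pr p (fun ω => (X ω, Y ω)) (x, y) = pr p X x := by
  unfold pr
  rw [Finset.sum_comm]
  apply Finset.sum_congr rfl
  intro ω _
  by_cases h : X ω = x
  · simp [Prod.ext_iff, h]
  · simp [Prod.ext_iff, h]

lemma pr_snd [Fintype α] (X : Ω → α) (Y : Ω → β) (y : β) :
    ∑ x : α, pr p (fun ω => (X ω, Y ω)) (x, y) = pr p Y y := by
  unfold pr
  rw [Finset.sum_comm]
  apply Finset.sum_congr rfl
  intro ω _
  by_cases h : Y ω = y
  · simp [Prod.ext_iff, h]
  · simp [Prod.ext_iff, h]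

lemma pr_pair_le_fst (h : ∀ ω, 0 ≤ p ω) (X : Ω → α) (Y : Ω → β) (x y) :
    pr p (fun ω => (X ω, Y ω)) (x, y) ≤ pr p X x := by
  apply Finset.sum_le_sum
  intro ω _
  by_cases hx : X ω = x <;> by_cases hy : Y ω = y <;>
    simp [Prod.ext_iff, hx, hy, h ω, le_refl]

lemma pr_pair_le_snd (h : ∀ ω, 0 ≤ p ω) (X : Ω → α) (Y : Ω → β) (x y) :
    pr p (fun ω => (X ω, Y ω)) (x, y) ≤ pr p Y y := by
  apply Finset.sum_le_sum
  intro ω _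
  by_cases hx : X ω = x <;> by_cases hy : Y ω = y <;>
    simp [Prod.ext_iff, hx, hy, h ω, le_refl]

lemma ent_eq [Fintype α] (X : Ω → α) :
    ent p X = -∑ x : α, pr p X x * Real.logb 2 (pr p X x) := by
  unfold ent
  congr 1
  apply Finset.sum_subset (Finset.subset_univ _)
  intro x _ hx
  have h0 : pr p X x = 0 := by
    apply Finset.sum_eq_zero
    intro ω _
    have : X ω ≠ x := fun h => hx (h ▸ Finset.mem_image_of_mem X (Finset.mem_univ ω))
    simp [this]
  simp [h0]
end helpers

lemma gibbs {ι : Type*} (s : Finset ι) (a b : ι → ℝ)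
    (ha : ∀ i ∈ s, 0 ≤ a i) (hb : ∀ i ∈ s, 0 ≤ b i)
    (hsa : ∑ i ∈ s, a i = 1) (hsb : ∑ i ∈ s, b i = 1)
    (hab : ∀ i ∈ s, b i = 0 → a i = 0) :
    (∑ i ∈ s, a i * Real.logb 2 (b i) ≤ ∑ i ∈ s, a i * Real.logb 2 (a i)) ∧
    ((∑ i ∈ s, a i * Real.logb 2 (b i) = ∑ i ∈ s, a i * Real.logb 2 (a i)) →
      ∀ i ∈ s, a i = b i) := by
  have hL : (0:ℝ) < Real.log 2 := Real.log_pos one_lt_two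
  set L := Real.log 2 with hLdef
  have key : ∀ i ∈ s,
      (a i * Real.logb 2 (b i) - a i * Real.logb 2 (a i) ≤ (b i - a i) / L) ∧
      (a i * Real.logb 2 (b i) - a i * Real.logb 2 (a i) = (b i - a i) / L → a i = b i) := by
    intro i hi
    rcases eq_or_lt_of_le (ha i hi) with h0 | h0
    · constructor
      · rw [← h0]
        simp only [zero_mul, sub_zero, sub_self]
        exact div_nonneg (hb i hi) hL.le
      · intro h
        rw [← h0] at h ⊢
        simp only [zero_mul, sub_self, sub_zero] at h
        have hb0 : b i = 0 := by
          have := h.symm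
          field_simp at this
          linarith
        linarith
    · have hb0 : 0 < b i := by
        rcases eq_or_lt_of_le (hb i hi) with h | h
        · exact absurd (hab i hi h.symm) (by linarith)
        · exact h
      have expand : a i * Real.logb 2 (b i) - a i * Real.logb 2 (a i)
          = a i * Real.log (b i / a i) / L := by
        rw [Real.log_div hb0.ne' h0.ne', Real.logb, Real.logb, ← hLdef]
        ring
      have hx : 0 < b i / a i := div_pos hb0 h0
      have hle : Real.log (b i / a i) ≤ b i / a i - 1 := Real.log_le_sub_one_of_pos hx
      have hnum : a i * Real.log (b i / a i) ≤ b i - a i := by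
        have h2 : a i * (b i / a i - 1) = b i - a i := by field_simp
        nlinarith
      constructor
      · rw [expand]
        gcongr
      · intro heq
        rw [expand] at heq
        have h1 : a i * Real.log (b i / a i) = b i - a i := by
          field_simp at heq
          linarith
        by_contra hne
        have hne1 : b i / a i ≠ 1 := by
          intro h
          apply hne
          field_simp at h
          linarith
        have hstrict := Real.log_lt_sub_one_of_pos hx hne1
        have h2 : a i * (b i / a i - 1) = b i - a i := by field_simp
        nlinarith [mul_lt_mul_of_pos_left hstrict h0]
  have hsum0 : ∑ i ∈ s, (b i - a i) / L = 0 := by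
    rw [← Finset.sum_div, Finset.sum_sub_distrib, hsa, hsb]
    simp
  have hle : ∑ i ∈ s, (a i * Real.logb 2 (b i) - a i * Real.logb 2 (a i))
      ≤ ∑ i ∈ s, (b i - a i) / L :=
    Finset.sum_le_sum fun i hi => (key i hi).1
  rw [Finset.sum_sub_distrib, hsum0] at hle
  refine ⟨by linarith, ?_⟩
  intro heq i hi
  have hzero : ∑ i ∈ s, (a i * Real.logb 2 (b i) - a i * Real.logb 2 (a i))
      = ∑ i ∈ s, (b i - a i) / L := by
    rw [Finset.sum_sub_distrib, hsum0, heq]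
    ring
  have := (Finset.sum_eq_sum_iff_of_le fun i hi => (key i hi).1).mp hzero i hi
  exact (key i hi).2 this

lemma ent_congr {Ω α : Type*} [Fintype Ω] [Fintype α] (p : Ω → ℝ) {X Y : Ω → α}
    (h : ∀ ω, p ω ≠ 0 → X ω = Y ω) : ent p X = ent p Y := by
  rw [ent_eq, ent_eq]
  congr 1
  apply Finset.sum_congr rfl
  intro x _
  rw [pr_congr p h]

lemma ent_comp {Ω α β : Type*} [Fintype Ω] [Fintype α] [Fintype β] (p : Ω → ℝ)
    (f : α → β) (hf : Function.Injective f) (Z : Ω → α) :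
    ent p (fun ω => f (Z ω)) = ent p Z := by
  rw [ent_eq, ent_eq]
  congr 1
  have h1 : ∑ y : β, pr p (fun ω => f (Z ω)) y * Real.logb 2 (pr p (fun ω => f (Z ω)) y)
      = ∑ y ∈ Finset.univ.image f,
          pr p (fun ω => f (Z ω)) y * Real.logb 2 (pr p (fun ω => f (Z ω)) y) := by
    symm
    apply Finset.sum_subset (Finset.subset_univ _)
    intro y _ hy
    have h0 : pr p (fun ω => f (Z ω)) y = 0 := by
      apply Finset.sum_eq_zero
      intro ω _
      have : f (Z ω) ≠ y := fun hc => hy (hc ▸ Finset.mem_image_of_mem f (Finset.mem_univ (Z ω)))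
      simp [this]
    simp [h0]
  rw [h1, Finset.sum_image (fun x _ y _ h => hf h)]
  apply Finset.sum_congr rfl
  intro x _
  have hpr : pr p (fun ω => f (Z ω)) (f x) = pr p Z x := by
    unfold pr
    apply Finset.sum_congr rfl
    intro ω _
    by_cases h : Z ω = x
    · simp [h]
    · have hne : f (Z ω) ≠ f x := fun hc => h (hf hc)
      simp [hne, h]
  rw [hpr]

lemma mi_key {Ω α β : Type*} [Fintype Ω] [Fintype α] [Fintype β] (p : Ω → ℝ)
    (hp : IsPMF p) (X : Ω → α) (Y : Ω → β) :
    0 ≤ mi p X Y ∧ (mi p X Y = 0 →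
      ∀ x y, pr p (fun ω => (X ω, Y ω)) (x, y) = pr p X x * pr p Y y) := by
  obtain ⟨hp0, hp1⟩ := hp
  set q : α × β → ℝ := fun z => pr p (fun ω => (X ω, Y ω)) z with hq
  set b : α × β → ℝ := fun z => pr p X z.1 * pr p Y z.2 with hbdef
  have hqn : ∀ z : α × β, 0 ≤ q z := fun z => pr_nonneg p hp0 _ z
  have hbn : ∀ z : α × β, 0 ≤ b z := fun z =>
    mul_nonneg (pr_nonneg p hp0 X z.1) (pr_nonneg p hp0 Y z.2)
  have hqs : ∑ z : α × β, q z = 1 := by rw [hq]; rw [sum_pr]; exact hp1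
  have hbs : ∑ z : α × β, b z = 1 := by
    rw [hbdef]
    rw [Fintype.sum_prod_type]
    simp only
    rw [← Finset.sum_mul_sum]
    rw [sum_pr, sum_pr, hp1, mul_one]
  have hqle1 : ∀ z : α × β, q z ≤ pr p X z.1 := fun z => pr_pair_le_fst p hp0 X Y z.1 z.2
  have hqle2 : ∀ z : α × β, q z ≤ pr p Y z.2 := fun z => pr_pair_le_snd p hp0 X Y z.1 z.2
  have hab : ∀ z ∈ Finset.univ (α := α × β), b z = 0 → q z = 0 := by
    intro z _ hz
    rcases mul_eq_zero.mp hz with h | h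
    · exact le_antisymm (h ▸ hqle1 z) (hqn z)
    · exact le_antisymm (h ▸ hqle2 z) (hqn z)
  have hmi : mi p X Y = ∑ z : α × β, q z * Real.logb 2 (q z)
      - ∑ z : α × β, q z * Real.logb 2 (b z) := by
    unfold mi
    rw [ent_eq, ent_eq, ent_eq]
    have hX : ∑ x : α, pr p X x * Real.logb 2 (pr p X x)
        = ∑ z : α × β, q z * Real.logb 2 (pr p X z.1) := by
      rw [Fintype.sum_prod_type]
      apply Finset.sum_congr rfl
      intro x _
      dsimp only
      rw [← Finset.sum_mul, pr_fst]
    have hY : ∑ y : β, pr p Y y * Real.logb 2 (pr p Y y)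
        = ∑ z : α × β, q z * Real.logb 2 (pr p Y z.2) := by
      rw [Fintype.sum_prod_type_right]
      apply Finset.sum_congr rfl
      intro y _
      dsimp only
      rw [← Finset.sum_mul]
      congr 1
      exact (pr_snd p X Y y).symm
    have hcomb : ∑ z : α × β, q z * Real.logb 2 (pr p X z.1)
        + ∑ z : α × β, q z * Real.logb 2 (pr p Y z.2)
        = ∑ z : α × β, q z * Real.logb 2 (b z) := by
      rw [← Finset.sum_add_distrib]
      apply Finset.sum_congr rfl
      intro z _
      by_cases h : q z = 0
      · simp [h]
      · have h1 : 0 < pr p X z.1 := lt_of_lt_of_le (lt_of_le_of_ne (hqn z) (Ne.symm h)) (hqle1 z)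
        have h2 : 0 < pr p Y z.2 := lt_of_lt_of_le (lt_of_le_of_ne (hqn z) (Ne.symm h)) (hqle2 z)
        rw [hbdef]
        simp only
        rw [Real.logb_mul h1.ne' h2.ne']
        ring
    have hqa : ∀ z, pr p (fun ω => (X ω, Y ω)) z = q z := fun _ => rfl
    simp only [hqa]
    rw [hX, hY]
    linarith
  have hg := gibbs Finset.univ q b (fun z _ => hqn z) (fun z _ => hbn z) hqs hbs hab
  constructor
  · rw [hmi]; linarith [hg.1]
  · intro h0 x y
    have : ∑ z : α × β, q z * Real.logb 2 (b z) = ∑ z : α × β, q z * Real.logb 2 (q z) := by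
      rw [hmi] at h0; linarith
    exact hg.2 this (x, y) (Finset.mem_univ _)

lemma ent_le_one {Ω : Type*} [Fintype Ω] (p : Ω → ℝ) (hp : IsPMF p) (Y : Ω → Bool) :
    ent p Y ≤ 1 := by
  obtain ⟨hp0, hp1⟩ := hp
  have hg := gibbs Finset.univ (fun y => pr p Y y) (fun _ => (1:ℝ)/2)
    (fun y _ => pr_nonneg p hp0 Y y) (fun _ _ => by norm_num)
    (by rw [sum_pr]; exact hp1) (by norm_num) (fun y _ h => by norm_num at h)
  have hlogb : Real.logb 2 ((1:ℝ)/2) = -1 := by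
    rw [one_div, Real.logb_inv, Real.logb_self_eq_one] <;> norm_num
  have h1 : ∑ y : Bool, pr p Y y * Real.logb 2 ((1:ℝ)/2) = -1 := by
    rw [hlogb]
    rw [← Finset.sum_mul, sum_pr, hp1]
    ring
  rw [ent_eq]
  have := hg.1
  rw [h1] at this
  linarith

lemma ent_pair_fst {Ω α β : Type*} [Fintype Ω] [Fintype α] [Fintype β] (p : Ω → ℝ)
    (hp : IsPMF p) (X : Ω → α) (Y : Ω → β) :
    ent p X ≤ ent p (fun ω => (X ω, Y ω)) ∧
    (ent p (fun ω => (X ω, Y ω)) = ent p X →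
      ∀ x y, pr p (fun ω => (X ω, Y ω)) (x, y) ≠ 0 →
        pr p (fun ω => (X ω, Y ω)) (x, y) = pr p X x) := by
  obtain ⟨hp0, hp1⟩ := hp
  set q : α × β → ℝ := fun z => pr p (fun ω => (X ω, Y ω)) z with hq
  have hqn : ∀ z : α × β, 0 ≤ q z := fun z => pr_nonneg p hp0 _ z
  have hqle : ∀ z : α × β, q z ≤ pr p X z.1 := fun z => pr_pair_le_fst p hp0 X Y z.1 z.2
  have hterm : ∀ z : α × β, 0 ≤ q z * Real.logb 2 (pr p X z.1) - q z * Real.logb 2 (q z) := by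
    intro z
    by_cases h : q z = 0
    · simp [h]
    · have h0 : 0 < q z := lt_of_le_of_ne (hqn z) (Ne.symm h)
      have := Real.logb_le_logb_of_le (b := 2) one_lt_two h0 (hqle z)
      nlinarith
  have hdiff : ent p (fun ω => (X ω, Y ω)) - ent p X
      = ∑ z : α × β, (q z * Real.logb 2 (pr p X z.1) - q z * Real.logb 2 (q z)) := by
    rw [ent_eq, ent_eq]
    have hX : ∑ x : α, pr p X x * Real.logb 2 (pr p X x)
        = ∑ z : α × β, q z * Real.logb 2 (pr p X z.1) := by
      rw [Fintype.sum_prod_type]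
      apply Finset.sum_congr rfl
      intro x _
      dsimp only
      rw [← Finset.sum_mul, pr_fst]
    have hqa : ∀ z, pr p (fun ω => (X ω, Y ω)) z = q z := fun _ => rfl
    simp only [hqa]
    rw [hX, Finset.sum_sub_distrib]
    ring
  constructor
  · have := Finset.sum_nonneg (fun z (_ : z ∈ Finset.univ) => hterm z)
    linarith [hdiff ▸ this]
  · intro heq x y hne
    have hsum0 : ∑ z : α × β, (q z * Real.logb 2 (pr p X z.1) - q z * Real.logb 2 (q z)) = 0 := by
      rw [← hdiff, heq]; ring
    have hall := (Finset.sum_eq_zero_iff_of_nonneg (fun z _ => hterm z)).mp hsum0 (x, y)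
      (Finset.mem_univ _)
    have h0 : 0 < q (x, y) := lt_of_le_of_ne (hqn (x, y)) (Ne.symm hne)
    by_contra hc
    have hlt : q (x, y) < pr p X x := lt_of_le_of_ne (hqle (x, y)) hc
    have := Real.logb_lt_logb (b := 2) one_lt_two h0 hlt
    nlinarith

set_option maxHeartbeats 1000000 in
/-- **Switch channel, Example 1 (first part).**  The state `S` is uniform on a two-element
set (`S = 0` selects `X₁`, `S = 1` selects `X₂`), the joint pmf of `(S,V,X₁,X₂)` has the
product form `(1/2)·P_{X₂}(x₂)·P_{X₁|X₂}(x₁|x₂)·P_{V|S,X₁,X₂}(v|s,x₁,x₂)` and `Y = X_S`.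
If `I(V,X₁,X₂ ; Y) - I(V,X₁,X₂ ; S) ≥ 1`, then `H(Y) = 1`, `S` is independent of
`(V,X₁,X₂)`, `H(Y|X₁,X₂) = 0` and `P(X₁ = X₂) = 1`. -/
theorem switch_channel_sum_rate_consequences
    {Ω 𝒱 : Type*} [Fintype Ω] [Fintype 𝒱]
    (p : Ω → ℝ) (hp : IsPMF p)
    (S : Ω → Fin 2) (V : Ω → 𝒱) (X₁ X₂ Y : Ω → Bool)
    (hform : ∃ (PX2 : Bool → ℝ) (PX12 : Bool → Bool → ℝ) (PV : Fin 2 → Bool → Bool → 𝒱 → ℝ),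
      (∀ x2, 0 ≤ PX2 x2) ∧ (∑ x2, PX2 x2 = 1) ∧
      (∀ x1 x2, 0 ≤ PX12 x1 x2) ∧ (∀ x2, ∑ x1, PX12 x1 x2 = 1) ∧
      (∀ s x1 x2 v, 0 ≤ PV s x1 x2 v) ∧ (∀ s x1 x2, ∑ v, PV s x1 x2 v = 1) ∧
      (∀ s v x1 x2, pr p (fun ω => (S ω, V ω, X₁ ω, X₂ ω)) (s, v, x1, x2)
          = 1/2 * PX2 x2 * PX12 x1 x2 * PV s x1 x2 v))
    (hY : ∀ ω, Y ω = if S ω = 0 then X₁ ω else X₂ ω)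
    (hI : 1 ≤ mi p (fun ω => (V ω, X₁ ω, X₂ ω)) Y - mi p (fun ω => (V ω, X₁ ω, X₂ ω)) S) :
    ent p Y = 1 ∧
    IndepRV p S (fun ω => (V ω, X₁ ω, X₂ ω)) ∧
    condEnt p Y (fun ω => (X₁ ω, X₂ ω)) = 0 ∧
    (∑ ω : Ω, if X₁ ω = X₂ ω then p ω else 0) = 1 := by
  obtain ⟨hp0, hp1⟩ := hp
  obtain ⟨PX2, PX12, PV, hPX2n, hPX2s, hPX12n, hPX12s, hPVn, hPVs, hjoint⟩ := hform
  set W : Ω → 𝒱 × Bool × Bool := fun ω => (V ω, X₁ ω, X₂ ω) with hWdef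
  have hWapp : ∀ ω, W ω = (V ω, X₁ ω, X₂ ω) := fun ω => rfl
  -- S is uniform
  have hS : ∀ s, pr p S s = 1/2 := by
    intro s
    have h1 : pr p S s = ∑ v : 𝒱, ∑ x1 : Bool, ∑ x2 : Bool,
        (1/2 * PX2 x2 * PX12 x1 x2 * PV s x1 x2 v) := by
      rw [← pr_fst p S W s, Fintype.sum_prod_type]
      apply Finset.sum_congr rfl; intro v _
      rw [Fintype.sum_prod_type]
      apply Finset.sum_congr rfl; intro x1 _
      apply Finset.sum_congr rfl; intro x2 _
      exact hjoint s v x1 x2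
    rw [h1, Finset.sum_comm]
    have h2 : ∀ x1 : Bool, ∑ v : 𝒱, ∑ x2 : Bool, 1/2 * PX2 x2 * PX12 x1 x2 * PV s x1 x2 v
        = ∑ x2 : Bool, 1/2 * PX2 x2 * PX12 x1 x2 := by
      intro x1
      rw [Finset.sum_comm]
      apply Finset.sum_congr rfl
      intro x2 _
      rw [← Finset.mul_sum, hPVs s x1 x2, mul_one]
    rw [Finset.sum_congr rfl (fun x1 _ => h2 x1), Finset.sum_comm]
    have h3 : ∀ x2 : Bool, ∑ x1 : Bool, 1/2 * PX2 x2 * PX12 x1 x2 = 1/2 * PX2 x2 := by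
      intro x2
      rw [← Finset.mul_sum, hPX12s x2, mul_one]
    rw [Finset.sum_congr rfl (fun x2 _ => h3 x2), ← Finset.mul_sum, hPX2s, mul_one]
  -- sandwich argument
  have hmiS := mi_key p ⟨hp0, hp1⟩ W S
  have hpair := ent_pair_fst p ⟨hp0, hp1⟩ W Y
  have hY1 : ent p Y ≤ 1 := ent_le_one p ⟨hp0, hp1⟩ Y
  have hmile : mi p W Y ≤ ent p Y := by
    have := hpair.1
    unfold mi
    linarith
  have hentY : ent p Y = 1 := le_antisymm hY1 (by linarith [hmiS.1])
  have hmiS0 : mi p W S = 0 := le_antisymm (by linarith) hmiS.1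
  have hmiY1 : mi p W Y = 1 := le_antisymm (by linarith) (by linarith [hmiS.1])
  have hentWY : ent p (fun ω => (W ω, Y ω)) = ent p W := by
    unfold mi at hmiY1
    linarith
  -- independence
  have hindWS : ∀ w s', pr p (fun ω => (W ω, S ω)) (w, s') = pr p W w * pr p S s' :=
    fun w s' => hmiS.2 hmiS0 w s'
  have hindep : IndepRV p S W := by
    intro s' w
    have hswap : pr p (fun ω => (S ω, W ω)) (s', w) = pr p (fun ω => (W ω, S ω)) (w, s') := by
      unfold pr
      apply Finset.sum_congr rfl
      intro ω _
      by_cases h1 : S ω = s' <;> by_cases h2 : W ω = w <;> simp [Prod.ext_iff, h1, h2]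
    rw [hswap, hindWS, mul_comm]
  -- determinism of Y given W
  have hdet := hpair.2 hentWY
  -- almost surely X₁ = X₂
  have hX12 : ∀ ω0, p ω0 ≠ 0 → X₁ ω0 = X₂ ω0 := by
    intro ω0 hw0
    by_contra hne
    have hple : p ω0 ≤ pr p W (V ω0, X₁ ω0, X₂ ω0) := by
      have h := Finset.single_le_sum
        (f := fun ω => @ite ℝ (W ω = (V ω0, X₁ ω0, X₂ ω0))
          (Classical.propDecidable _) (p ω) 0)
        (fun ω _ => by split; exacts [hp0 ω, le_refl 0]) (Finset.mem_univ ω0)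
      rw [if_pos (hWapp ω0)] at h
      unfold pr
      exact h
    have hpw : 0 < pr p W (V ω0, X₁ ω0, X₂ ω0) :=
      lt_of_lt_of_le (lt_of_le_of_ne (hp0 ω0) (Ne.symm hw0)) hple
    have hq1 : pr p (fun ω => (W ω, S ω)) ((V ω0, X₁ ω0, X₂ ω0), 0)
        ≤ pr p (fun ω => (W ω, Y ω)) ((V ω0, X₁ ω0, X₂ ω0), X₁ ω0) := by
      apply Finset.sum_le_sum
      intro ω _
      by_cases h : (W ω, S ω) = ((V ω0, X₁ ω0, X₂ ω0), (0 : Fin 2))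
      · rw [if_pos h]
        have hWh : W ω = (V ω0, X₁ ω0, X₂ ω0) := congrArg Prod.fst h
        have hSh : S ω = (0 : Fin 2) := congrArg Prod.snd h
        have hcomp : V ω = V ω0 ∧ X₁ ω = X₁ ω0 ∧ X₂ ω = X₂ ω0 := by
          have h' := hWh
          rw [hWapp] at h'
          simpa [Prod.ext_iff] using h'
        have hYω : Y ω = X₁ ω0 := by rw [hY ω, if_pos hSh, hcomp.2.1]
        rw [if_pos (by rw [Prod.ext_iff]; exact ⟨hWh, hYω⟩)]
      · rw [if_neg h]
        split
        · exact hp0 ω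
        · exact le_refl 0
    have hq2 : pr p (fun ω => (W ω, S ω)) ((V ω0, X₁ ω0, X₂ ω0), 1)
        ≤ pr p (fun ω => (W ω, Y ω)) ((V ω0, X₁ ω0, X₂ ω0), X₂ ω0) := by
      apply Finset.sum_le_sum
      intro ω _
      by_cases h : (W ω, S ω) = ((V ω0, X₁ ω0, X₂ ω0), (1 : Fin 2))
      · rw [if_pos h]
        have hWh : W ω = (V ω0, X₁ ω0, X₂ ω0) := congrArg Prod.fst h
        have hSh : S ω = (1 : Fin 2) := congrArg Prod.snd h
        have hcomp : V ω = V ω0 ∧ X₁ ω = X₁ ω0 ∧ X₂ ω = X₂ ω0 := by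
          have h' := hWh
          rw [hWapp] at h'
          simpa [Prod.ext_iff] using h'
        have hS0 : S ω ≠ 0 := by rw [hSh]; decide
        have hYω : Y ω = X₂ ω0 := by rw [hY ω, if_neg hS0, hcomp.2.2]
        rw [if_pos (by rw [Prod.ext_iff]; exact ⟨hWh, hYω⟩)]
      · rw [if_neg h]
        split
        · exact hp0 ω
        · exact le_refl 0
    have hWS0 : pr p (fun ω => (W ω, S ω)) ((V ω0, X₁ ω0, X₂ ω0), 0)
        = pr p W (V ω0, X₁ ω0, X₂ ω0) * (1/2) := by rw [hindWS, hS]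
    have hWS1 : pr p (fun ω => (W ω, S ω)) ((V ω0, X₁ ω0, X₂ ω0), 1)
        = pr p W (V ω0, X₁ ω0, X₂ ω0) * (1/2) := by rw [hindWS, hS]
    rw [hWS0] at hq1
    rw [hWS1] at hq2
    have hd1 : pr p (fun ω => (W ω, Y ω)) ((V ω0, X₁ ω0, X₂ ω0), X₁ ω0)
        = pr p W (V ω0, X₁ ω0, X₂ ω0) :=
      hdet _ _ (ne_of_gt (lt_of_lt_of_le (by linarith) hq1))
    have hd2 : pr p (fun ω => (W ω, Y ω)) ((V ω0, X₁ ω0, X₂ ω0), X₂ ω0)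
        = pr p W (V ω0, X₁ ω0, X₂ ω0) :=
      hdet _ _ (ne_of_gt (lt_of_lt_of_le (by linarith) hq2))
    have hmarg := pr_fst p W Y (V ω0, X₁ ω0, X₂ ω0)
    have hpairsum : pr p (fun ω => (W ω, Y ω)) ((V ω0, X₁ ω0, X₂ ω0), X₁ ω0)
        + pr p (fun ω => (W ω, Y ω)) ((V ω0, X₁ ω0, X₂ ω0), X₂ ω0)
        ≤ ∑ y : Bool, pr p (fun ω => (W ω, Y ω)) ((V ω0, X₁ ω0, X₂ ω0), y) := by
      rw [← Finset.sum_pair (f := fun y => pr p (fun ω => (W ω, Y ω)) ((V ω0, X₁ ω0, X₂ ω0), y)) hne]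
      exact Finset.sum_le_sum_of_subset_of_nonneg (Finset.subset_univ _)
        (fun y _ _ => pr_nonneg p hp0 _ _)
    rw [hmarg, hd1, hd2] at hpairsum
    linarith
  -- P(X₁ = X₂) = 1
  have hsum : (∑ ω : Ω, if X₁ ω = X₂ ω then p ω else 0) = 1 := by
    rw [← hp1]
    apply Finset.sum_congr rfl
    intro ω _
    by_cases h : X₁ ω = X₂ ω
    · rw [if_pos h]
    · rw [if_neg h]
      have : p ω = 0 := by
        by_contra hc
        exact h (hX12 ω hc)
      rw [this]
  -- conditional entropy of Y given (X₁, X₂) is 0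
  have hcond : condEnt p Y (fun ω => (X₁ ω, X₂ ω)) = 0 := by
    unfold condEnt
    have hfinj : Function.Injective (fun z : Bool × Bool => (z.1, z)) :=
      fun a b h => (Prod.ext_iff.mp h).2
    have h1 : ent p (fun ω => (Y ω, (X₁ ω, X₂ ω))) = ent p (fun ω => (X₁ ω, (X₁ ω, X₂ ω))) := by
      apply ent_congr
      intro ω hω
      have h12 : X₁ ω = X₂ ω := hX12 ω hω
      have hYω : Y ω = X₁ ω := by rw [hY ω, ← h12, ite_self]
      rw [hYω]
    have h2 : ent p (fun ω => (X₁ ω, (X₁ ω, X₂ ω))) = ent p (fun ω => (X₁ ω, X₂ ω)) :=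
      ent_comp p (fun z : Bool × Bool => (z.1, z)) hfinj (fun ω => (X₁ ω, X₂ ω))
    rw [h1, h2, sub_self]
  exact ⟨hentY, hindep, hcond, hsum⟩
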